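/- The set I = {σ_{l,m} : l ∈ ℕ, m ≥ 1} ∪ {λ₀} is a two-sided ideal of the semigroup of endomorphisms of C₊ generated by {λₖ : k ∈ ℕ} ∪ {σ_{l,m} : l ∈ ℕ, m ≥ 1} under composition. -/
import Mathlib


def bmul (x y : ℕ × ℕ) : ℕ × ℕ :=
  (x.1 + y.1 - min x.2 y.1, x.2 + y.2 - min x.2 y.1)

abbrev Cplus := {x : ℕ × ℕ // x.1 ≤ x.2}

instance : Mul Cplus :=
  ⟨fun x y => ⟨bmul x.1 y.1, by have hx := x.2; have hy := y.2; simp only [bmul]; omega⟩⟩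

instance : One Cplus := ⟨⟨(0, 0), le_refl 0⟩⟩

theorem Cplus.mul_def (x y : Cplus) : (x * y).1 = bmul x.1 y.1 := rfl

theorem Cplus.one_def : (1 : Cplus).1 = (0, 0) := rfl

instance : Monoid Cplus where
  mul_assoc x y z := Subtype.ext (by
    simp only [Cplus.mul_def, bmul, Prod.ext_iff]; omega)
  one_mul x := Subtype.ext (by
    have := x.2
    simp only [Cplus.mul_def, Cplus.one_def, bmul, Prod.ext_iff]; omega)
  mul_one x := Subtype.ext (by
    have := x.2
    simp only [Cplus.mul_def, Cplus.one_def, bmul, Prod.ext_iff]; omega)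

def lam (k : ℕ) : Cplus → Cplus :=
  fun x => ⟨(k * x.1.1, k * x.1.2), Nat.mul_le_mul_left k x.2⟩

def sig (l m : ℕ) : Cplus → Cplus := fun x =>
  if x.1.1 = x.1.2 then 1 else ⟨(l, l + m * (x.1.2 - x.1.1)), by omega⟩

def lamns (n s : ℕ) : Cplus → Cplus := fun x =>
  if x.1.1 = 0 then ⟨(0, n * x.1.2), Nat.zero_le _⟩
  else ⟨(n * x.1.1 - s, n * x.1.2 - s), by
    have := Nat.mul_le_mul_left n x.2; omega⟩

def vsig : Cplus → Cplus := fun x =>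
  if x.1 = (0, 0) then 1 else ⟨(x.1.1 + 1, x.1.2 + 1), by have := x.2; omega⟩

def bpow (x : ℕ × ℕ) : ℕ → ℕ × ℕ
  | 0 => (0, 0)
  | n + 1 => bmul (bpow x n) x

def Iset : Set (Function.End Cplus) :=
  {g | ∃ l m, 1 ≤ m ∧ g = sig l m} ∪ {lam 0}

def Gset : Set (Function.End Cplus) :=
  {g | ∃ k, g = lam k} ∪ {g | ∃ l m, 1 ≤ m ∧ g = sig l m}


lemma lam_zero_apply (x : Cplus) : lam 0 x = 1 := Subtype.ext (by simp [lam, Cplus.one_def])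

lemma lam_one (k : ℕ) : lam k 1 = 1 := Subtype.ext (by simp [lam, Cplus.one_def])

lemma sig_one (l m : ℕ) : sig l m 1 = 1 := by simp [sig, Cplus.one_def]

lemma mul_sub_nat (k i j : ℕ) (h : i ≤ j) : k * j - k * i = k * (j - i) := by
  obtain ⟨d, rfl⟩ := Nat.exists_eq_add_of_le h
  rw [Nat.mul_add, Nat.add_sub_cancel_left, Nat.add_sub_cancel_left]

lemma sig_lam_apply (l m k : ℕ) (hk : 1 ≤ k) (x : Cplus) :
    sig l m (lam k x) = sig l (m * k) x := by
  obtain ⟨⟨i, j⟩, hij⟩ := x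
  by_cases h : i = j
  · simp [sig, lam, h]
  · have h1 : ¬ (k * i = k * j) := by
      intro he; exact h (Nat.eq_of_mul_eq_mul_left hk he)
    simp only [sig, lam, h1, h, if_false]
    refine Subtype.ext (Prod.ext rfl ?_)
    simp only
    rw [mul_sub_nat k i j hij, ← Nat.mul_assoc]

lemma sig_sig_apply (l m l' m' : ℕ) (hm' : 1 ≤ m') (x : Cplus) :
    sig l m (sig l' m' x) = sig l (m * m') x := by
  obtain ⟨⟨i, j⟩, hij⟩ := x
  by_cases h : i = j
  · simp [sig, h, Cplus.one_def]
  · have hlt : i < j := lt_of_le_of_ne hij h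
    have hpos : 0 < m' * (j - i) := Nat.mul_pos hm' (by omega)
    have h2 : ¬ (l' = l' + m' * (j - i)) := by omega
    simp only [sig, h, if_false, if_neg h2]
    refine Subtype.ext (Prod.ext rfl ?_)
    simp only
    rw [Nat.add_sub_cancel_left, ← Nat.mul_assoc]

lemma lam_sig_apply (k l m : ℕ) (hk : 1 ≤ k) (x : Cplus) :
    lam k (sig l m x) = sig (k * l) (k * m) x := by
  obtain ⟨⟨i, j⟩, hij⟩ := x
  by_cases h : i = j
  · simp only [sig, h, if_pos]
    exact Subtype.ext (by simp [lam, Cplus.one_def])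
  · simp only [sig, lam, h, if_false]
    refine Subtype.ext (Prod.ext rfl ?_)
    simp only
    rw [Nat.mul_add, ← Nat.mul_assoc]

lemma closure_one (g : Function.End Cplus) (hg : g ∈ Subsemigroup.closure Gset) :
    g 1 = 1 := by
  induction hg using Subsemigroup.closure_induction with
  | mem g hg =>
    rcases hg with ⟨k, rfl⟩ | ⟨l, m, _, rfl⟩
    · exact lam_one k
    · exact sig_one l m
  | mul a b _ _ ha hb => show a (b 1) = 1; rw [hb, ha]

lemma key_step : ∀ f ∈ Iset, ∀ g ∈ Gset, f * g ∈ Iset ∧ g * f ∈ Iset := by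
  rintro f (⟨l, m, hm, rfl⟩ | rfl) g (⟨k, rfl⟩ | ⟨l', m', hm', rfl⟩)
  · rcases Nat.eq_zero_or_pos k with rfl | hk
    · constructor
      · refine Or.inr (Set.mem_singleton_iff.mpr ?_)
        funext x; show sig l m (lam 0 x) = lam 0 x
        rw [lam_zero_apply, sig_one]
      · refine Or.inr (Set.mem_singleton_iff.mpr ?_)
        funext x; show lam 0 (sig l m x) = lam 0 x
        rw [lam_zero_apply, lam_zero_apply]
    · exact ⟨Or.inl ⟨l, m * k, Nat.mul_pos hm hk, funext (sig_lam_apply l m k hk)⟩,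
        Or.inl ⟨k * l, k * m, Nat.mul_pos hk hm, funext (lam_sig_apply k l m hk)⟩⟩
  · exact ⟨Or.inl ⟨l, m * m', Nat.mul_pos hm hm', funext (sig_sig_apply l m l' m' hm')⟩,
      Or.inl ⟨l', m' * m, Nat.mul_pos hm' hm, funext (sig_sig_apply l' m' l m hm)⟩⟩
  · constructor
    · refine Or.inr (Set.mem_singleton_iff.mpr ?_)
      funext x; show lam 0 (lam k x) = lam 0 x
      rw [lam_zero_apply, lam_zero_apply]
    · refine Or.inr (Set.mem_singleton_iff.mpr ?_)
      funext x; show lam k (lam 0 x) = lam 0 x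
      rw [lam_zero_apply, lam_one]
  · constructor
    · refine Or.inr (Set.mem_singleton_iff.mpr ?_)
      funext x; show lam 0 (sig l' m' x) = lam 0 x
      rw [lam_zero_apply, lam_zero_apply]
    · refine Or.inr (Set.mem_singleton_iff.mpr ?_)
      funext x; show sig l' m' (lam 0 x) = lam 0 x
      rw [lam_zero_apply, sig_one]

/-- I = {σ_{l,m}} ∪ {λ₀} is a two-sided ideal of the subsemigroup of endomorphisms
of C₊ generated by the λ's and σ's under composition. -/
theorem Iset_is_ideal :
    Iset ⊆ (Subsemigroup.closure Gset : Set (Function.End Cplus)) ∧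
    ∀ f ∈ Iset, ∀ g ∈ Subsemigroup.closure Gset, f * g ∈ Iset ∧ g * f ∈ Iset := by
  constructor
  · intro f hf
    rcases hf with ⟨l, m, hm, rfl⟩ | rfl
    · exact Subsemigroup.subset_closure (Or.inr ⟨l, m, hm, rfl⟩)
    · exact Subsemigroup.subset_closure (Or.inl ⟨0, rfl⟩)
  · intro f hf g hg
    revert f
    induction hg using Subsemigroup.closure_induction with
    | mem g hgm => exact fun f hf => key_step f hf g hgm
    | mul a b _ _ iha ihb =>
      intro f hf
      constructor
      · rw [← mul_assoc]
        exact (ihb (f * a) ((iha f hf).1)).1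
      · rw [mul_assoc]
        exact (iha (b * f) ((ihb f hf).2)).2
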